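/- Let 0 < t < 1 and define \Upsilon_0(m) = t^{2m}(1-t^{2m+2})^2/((1-t^{4m+2})(1-t^{4m+4})) + t^{2m}(1-t^{2m})^2/((1-t^{4m})(1-t^{4m+2})) and \Upsilon_1(m) = -t^{2m+1}(1-t^{2m+2})^2/((1-t^{4m+4})\sqrt{(1-t^{4m+2})(1-t^{4m+6})}). Then the sequence c_m = (-1)^m t^{m^2} \sqrt{(1-t^{4m+2})/(1-t^2)} satisfies the recurrence c_{m+1} = (c_m(1-\Upsilon_0(m)) - c_{m-1}\Upsilon_1(m-1))/\Upsilon_1(m) for all m \ge 1. -/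

import Mathlib

theorem stmt_1 (t : ℝ) (h0 : 0 < t) (h1 : t < 1)
    (Y0 Y1 c : ℕ → ℝ)
    (hY0 : ∀ m : ℕ, Y0 m =
      t ^ (2*m) * (1 - t ^ (2*m+2)) ^ 2 / ((1 - t ^ (4*m+2)) * (1 - t ^ (4*m+4)))
      + t ^ (2*m) * (1 - t ^ (2*m)) ^ 2 / ((1 - t ^ (4*m)) * (1 - t ^ (4*m+2))))
    (hY1 : ∀ m : ℕ, Y1 m =
      -(t ^ (2*m+1) * (1 - t ^ (2*m+2)) ^ 2 /
        ((1 - t ^ (4*m+4)) * Real.sqrt ((1 - t ^ (4*m+2)) * (1 - t ^ (4*m+6))))))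
    (hc : ∀ m : ℕ, c m = (-1 : ℝ) ^ m * t ^ (m ^ 2) *
      Real.sqrt ((1 - t ^ (4*m+2)) / (1 - t ^ 2))) :
    ∀ m : ℕ, 1 ≤ m → c (m+1) = (c m * (1 - Y0 m) - c (m-1) * Y1 (m-1)) / Y1 m := by
  have hpow : ∀ n : ℕ, n ≠ 0 → 0 < 1 - t ^ n := fun n hn => by
    have := pow_lt_one₀ h0.le h1 hn; linarith
  intro m hm
  obtain ⟨k, rfl⟩ : ∃ k, m = k + 1 := ⟨m - 1, (Nat.succ_pred_eq_of_pos hm).symm⟩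
  simp only [Nat.add_sub_cancel]
  rw [hc, hc, hc, hY0, hY1, hY1]
  simp only [show 4*(k+1+1)+2 = 4*k+10 from by ring, show 2*(k+1) = 2*k+2 from by ring,
    show 2*(k+1)+2 = 2*k+4 from by ring, show 4*(k+1) = 4*k+4 from by ring,
    show 4*(k+1)+2 = 4*k+6 from by ring, show 4*(k+1)+4 = 4*k+8 from by ring,
    show 4*(k+1)+6 = 4*k+10 from by ring, show 2*(k+1)+1 = 2*k+3 from by ring, show 4*k+4+2 = 4*k+6 from by ring, show 4*k+4+4 = 4*k+8 from by ring, show 4*k+4+6 = 4*k+10 from by ring, show 2*k+2+2 = 2*k+4 from by ring, show 2*k+2+1 = 2*k+3 from by ring]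
  have pA : (0:ℝ) < 1 - t^2 := hpow 2 (by omega)
  have pE : (0:ℝ) < 1 - t^(4*k+2) := hpow _ (by omega)
  have pB : (0:ℝ) < 1 - t^(4*k+6) := hpow _ (by omega)
  have pD : (0:ℝ) < 1 - t^(4*k+10) := hpow _ (by omega)
  have p4 : (0:ℝ) < 1 - t^(4*k+4) := hpow _ (by omega)
  have p8 : (0:ℝ) < 1 - t^(4*k+8) := hpow _ (by omega)
  rw [Real.sqrt_div pE.le, Real.sqrt_div pB.le, Real.sqrt_div pD.le,
    Real.sqrt_mul pE.le, Real.sqrt_mul pB.le]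
  have saE : Real.sqrt (1-t^(4*k+2)) ^ 2 = 1 - t^(4*k+2) := Real.sq_sqrt pE.le
  have saB : Real.sqrt (1-t^(4*k+6)) ^ 2 = 1 - t^(4*k+6) := Real.sq_sqrt pB.le
  have saD : Real.sqrt (1-t^(4*k+10)) ^ 2 = 1 - t^(4*k+10) := Real.sq_sqrt pD.le
  have saA : Real.sqrt (1-t^2) ^ 2 = 1 - t^2 := Real.sq_sqrt pA.le
  have nA : Real.sqrt (1-t^2) ≠ 0 := (Real.sqrt_pos.mpr pA).ne'
  have nE : Real.sqrt (1-t^(4*k+2)) ≠ 0 := (Real.sqrt_pos.mpr pE).ne'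
  have nB : Real.sqrt (1-t^(4*k+6)) ≠ 0 := (Real.sqrt_pos.mpr pB).ne'
  have nD : Real.sqrt (1-t^(4*k+10)) ≠ 0 := (Real.sqrt_pos.mpr pD).ne'
  have hne : -(t ^ (2*k+3) * (1 - t ^ (2*k+4)) ^ 2 /
      ((1 - t ^ (4*k+8)) * (Real.sqrt (1 - t ^ (4*k+6)) * Real.sqrt (1 - t ^ (4*k+10))))) ≠ 0 := by
    apply neg_ne_zero.mpr
    apply div_ne_zero
    · exact mul_ne_zero (pow_ne_zero _ h0.ne') (pow_ne_zero _ (hpow (2*k+4) (by omega)).ne')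
    · exact mul_ne_zero p8.ne' (mul_ne_zero nB nD)
  set sa := Real.sqrt (1 - t^2) with hsa
  set se := Real.sqrt (1 - t^(4*k+2)) with hse
  set sb := Real.sqrt (1 - t^(4*k+6)) with hsb
  set sd := Real.sqrt (1 - t^(4*k+10)) with hsd
  rw [eq_div_iff hne]
  field_simp
  ring_nf
  rw [saB]
  ring
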